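/- The operators E and F on V = ℂ^{n+1} satisfy the (r,s)-Serre relation EF³ − (rs)^{−1}[3] FEF² + (rs)^{−1}[3] F²EF − F³E = 0, where [3] = r² + rs + s². (This is the relation (ad_r f₁)³(f₀) = 0 evaluated on the evaluation representation of U_{r,s}(ŝl₂).) -/
import Mathlib

/-- The two-parameter quantum integer `[m] = (r^m - s^m)/(r - s)`. -/
noncomputable def qint (r s : ℂ) (m : ℕ) : ℂ := (r ^ m - s ^ m) / (r - s)

/-- The operator `E` on `V = ℂ^{n+1}`, `E v_i = [n+1-i] v_{i-1}` (with `v_{-1} = 0`). -/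
noncomputable def Emat (n : ℕ) (r s : ℂ) : Matrix (Fin (n + 1)) (Fin (n + 1)) ℂ :=
  Matrix.of fun j i => if (j : ℕ) + 1 = (i : ℕ) then qint r s (n + 1 - (i : ℕ)) else 0

/-- The operator `F` on `V = ℂ^{n+1}`, `F v_i = [i+1] v_{i+1}` (with `v_{n+1} = 0`). -/
noncomputable def Fmat (n : ℕ) (r s : ℂ) : Matrix (Fin (n + 1)) (Fin (n + 1)) ℂ :=
  Matrix.of fun j i => if (j : ℕ) = (i : ℕ) + 1 then qint r s ((i : ℕ) + 1) else 0

lemma qint_zero (r s : ℂ) : qint r s 0 = 0 := by simp [qint]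

lemma Fmul (n : ℕ) (r s : ℂ) (d : ℕ) (g : ℕ → ℂ) :
    Fmat n r s * Matrix.of (fun j i : Fin (n+1) => if (j:ℕ) = (i:ℕ) + d then g i else 0)
    = Matrix.of (fun j i : Fin (n+1) => if (j:ℕ) = (i:ℕ) + (d+1) then qint r s ((i:ℕ)+d+1) * g i else 0) := by
  ext j i
  have hj := j.isLt
  rw [Matrix.mul_apply]
  simp only [Matrix.of_apply, Fmat]
  rw [Fin.sum_univ_eq_sum_range (fun k => (if (j:ℕ) = k + 1 then qint r s (k+1) else 0) * (if k = (i:ℕ) + d then g i else 0))]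
  simp only [mul_ite, mul_zero]
  rw [Finset.sum_ite_eq' (Finset.range (n+1)) ((i:ℕ)+d)]
  simp only [Finset.mem_range]
  split_ifs <;> first | (exfalso; omega) | ring1

lemma Emul (n : ℕ) (r s : ℂ) (d : ℕ) (g : ℕ → ℂ) :
    Emat n r s * Matrix.of (fun j i : Fin (n+1) => if (j:ℕ) = (i:ℕ) + (d+1) then g i else 0)
    = Matrix.of (fun j i : Fin (n+1) => if (j:ℕ) = (i:ℕ) + d then qint r s (n+1-((i:ℕ)+d+1)) * g i else 0) := by
  ext j i
  have hj := j.isLt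
  rw [Matrix.mul_apply]
  simp only [Matrix.of_apply, Emat]
  rw [Fin.sum_univ_eq_sum_range (fun k => (if (j:ℕ) + 1 = k then qint r s (n+1-k) else 0) * (if k = (i:ℕ) + (d+1) then g i else 0))]
  simp only [mul_ite, mul_zero]
  rw [Finset.sum_ite_eq' (Finset.range (n+1)) ((i:ℕ)+(d+1))]
  simp only [Finset.mem_range, ← Nat.add_assoc]
  split_ifs <;>
    first
    | (exfalso; omega)
    | ring1
    | (have h0 : n + 1 - ((i:ℕ) + d + 1) = 0 := by omega
       rw [h0, qint_zero, zero_mul])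

lemma F3E (n : ℕ) (r s : ℂ) :
    Matrix.of (fun j i : Fin (n+1) => if (j:ℕ) = (i:ℕ) + 3 then qint r s ((i:ℕ)+3) * qint r s ((i:ℕ)+2) * qint r s ((i:ℕ)+1) else 0) * Emat n r s
    = Matrix.of (fun j i : Fin (n+1) => if (j:ℕ) = (i:ℕ) + 2 then qint r s ((i:ℕ)+2) * qint r s ((i:ℕ)+1) * qint r s (i:ℕ) * qint r s (n+1-(i:ℕ)) else 0) := by
  ext j i
  have hj := j.isLt
  rw [Matrix.mul_apply]
  simp only [Matrix.of_apply, Emat]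
  rw [Fin.sum_univ_eq_sum_range (fun k => (if (j:ℕ) = k + 3 then qint r s (k+3) * qint r s (k+2) * qint r s (k+1) else 0) * (if k + 1 = (i:ℕ) then qint r s (n+1-(i:ℕ)) else 0))]
  rcases Nat.eq_zero_or_pos (i:ℕ) with h0 | h0
  · rw [Finset.sum_eq_zero (by intro k hk; simp [h0])]
    rw [h0, qint_zero]
    split_ifs <;> ring1
  · obtain ⟨m, hm⟩ : ∃ m, (i:ℕ) = m + 1 := ⟨(i:ℕ) - 1, by omega⟩
    simp only [hm, add_left_inj]
    simp only [ite_mul, zero_mul, mul_ite, mul_zero]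
    rw [Finset.sum_ite_eq' (Finset.range (n+1)) m]
    simp only [Finset.mem_range]
    have e1 : m + 1 + 2 = m + 3 := by omega
    have e2 : m + 1 + 1 = m + 2 := by omega
    rw [e1, e2]
    split_ifs <;> first | (exfalso; omega) | ring1

set_option maxHeartbeats 1000000 in
lemma scalar_id (r s : ℂ) (hr : r ≠ 0) (hs : s ≠ 0) (h : r - s ≠ 0) (m a : ℕ) :
    qint r s a * (qint r s (m+3) * (qint r s (m+2) * qint r s (m+1)))
      - (r * s)⁻¹ * (r ^ 2 + r * s + s ^ 2) * (qint r s (m+2) * (qint r s (a+1) * (qint r s (m+2) * qint r s (m+1))))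
      + (r * s)⁻¹ * (r ^ 2 + r * s + s ^ 2) * (qint r s (m+2) * (qint r s (m+1) * (qint r s (a+2) * qint r s (m+1))))
      - qint r s (m+2) * qint r s (m+1) * qint r s m * qint r s (a+3) = 0 := by
  have hu : (r * s)⁻¹ * (r * s) = 1 := inv_mul_cancel₀ (mul_ne_zero hr hs)
  simp only [qint]
  linear_combination
    ((r^(m+2) - s^(m+2))/(r-s) * ((r^(m+1) - s^(m+1))/(r-s)) * ((r^m - s^m)/(r-s)) * ((r^(a+3) - s^(a+3))/(r-s))
      - (r^a - s^a)/(r-s) * ((r^(m+3) - s^(m+3))/(r-s) * ((r^(m+2) - s^(m+2))/(r-s) * ((r^(m+1) - s^(m+1))/(r-s))))) * hu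

/-- The `(r,s)`-Serre relation
`EF³ − (rs)⁻¹[3] FEF² + (rs)⁻¹[3] F²EF − F³E = 0`, where `[3] = r² + rs + s²`. -/
theorem serre_relation_F (n : ℕ) (r s : ℂ) (hr : r ≠ 0) (hs : s ≠ 0) (hrs : r ≠ s) :
    Emat n r s * Fmat n r s ^ 3
      - ((r * s)⁻¹ * (r ^ 2 + r * s + s ^ 2)) • (Fmat n r s * Emat n r s * Fmat n r s ^ 2)
      + ((r * s)⁻¹ * (r ^ 2 + r * s + s ^ 2)) • (Fmat n r s ^ 2 * Emat n r s * Fmat n r s)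
      - Fmat n r s ^ 3 * Emat n r s = 0 := by
  have hFF : Fmat n r s * Fmat n r s
      = Matrix.of (fun j i : Fin (n+1) => if (j:ℕ) = (i:ℕ) + 2 then qint r s ((i:ℕ)+2) * qint r s ((i:ℕ)+1) else 0) :=
    Fmul n r s 1 (fun m => qint r s (m+1))
  have hF3 : Fmat n r s * (Fmat n r s * Fmat n r s)
      = Matrix.of (fun j i : Fin (n+1) => if (j:ℕ) = (i:ℕ) + 3 then qint r s ((i:ℕ)+3) * (qint r s ((i:ℕ)+2) * qint r s ((i:ℕ)+1)) else 0) := by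
    rw [hFF]; exact Fmul n r s 2 (fun m => qint r s (m+2) * qint r s (m+1))
  have hEF3 : Emat n r s * (Fmat n r s * (Fmat n r s * Fmat n r s))
      = Matrix.of (fun j i : Fin (n+1) => if (j:ℕ) = (i:ℕ) + 2 then qint r s (n+1-((i:ℕ)+3)) * (qint r s ((i:ℕ)+3) * (qint r s ((i:ℕ)+2) * qint r s ((i:ℕ)+1))) else 0) := by
    rw [hF3]; exact Emul n r s 2 (fun m => qint r s (m+3) * (qint r s (m+2) * qint r s (m+1)))
  have hEF2 : Emat n r s * (Fmat n r s * Fmat n r s)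
      = Matrix.of (fun j i : Fin (n+1) => if (j:ℕ) = (i:ℕ) + 1 then qint r s (n+1-((i:ℕ)+2)) * (qint r s ((i:ℕ)+2) * qint r s ((i:ℕ)+1)) else 0) := by
    rw [hFF]; exact Emul n r s 1 (fun m => qint r s (m+2) * qint r s (m+1))
  have hFEF2 : Fmat n r s * (Emat n r s * (Fmat n r s * Fmat n r s))
      = Matrix.of (fun j i : Fin (n+1) => if (j:ℕ) = (i:ℕ) + 2 then qint r s ((i:ℕ)+2) * (qint r s (n+1-((i:ℕ)+2)) * (qint r s ((i:ℕ)+2) * qint r s ((i:ℕ)+1))) else 0) := by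
    rw [hEF2]; exact Fmul n r s 1 (fun m => qint r s (n+1-(m+2)) * (qint r s (m+2) * qint r s (m+1)))
  have hEF : Emat n r s * Fmat n r s
      = Matrix.of (fun j i : Fin (n+1) => if (j:ℕ) = (i:ℕ) + 0 then qint r s (n+1-((i:ℕ)+1)) * qint r s ((i:ℕ)+1) else 0) :=
    Emul n r s 0 (fun m => qint r s (m+1))
  have hFEF : Fmat n r s * (Emat n r s * Fmat n r s)
      = Matrix.of (fun j i : Fin (n+1) => if (j:ℕ) = (i:ℕ) + 1 then qint r s ((i:ℕ)+1) * (qint r s (n+1-((i:ℕ)+1)) * qint r s ((i:ℕ)+1)) else 0) := by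
    rw [hEF]; exact Fmul n r s 0 (fun m => qint r s (n+1-(m+1)) * qint r s (m+1))
  have hFFEF : Fmat n r s * (Fmat n r s * (Emat n r s * Fmat n r s))
      = Matrix.of (fun j i : Fin (n+1) => if (j:ℕ) = (i:ℕ) + 2 then qint r s ((i:ℕ)+2) * (qint r s ((i:ℕ)+1) * (qint r s (n+1-((i:ℕ)+1)) * qint r s ((i:ℕ)+1))) else 0) := by
    rw [hFEF]; exact Fmul n r s 1 (fun m => qint r s (m+1) * (qint r s (n+1-(m+1)) * qint r s (m+1)))
  have hF3' : Fmat n r s * (Fmat n r s * Fmat n r s)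
      = Matrix.of (fun j i : Fin (n+1) => if (j:ℕ) = (i:ℕ) + 3 then qint r s ((i:ℕ)+3) * qint r s ((i:ℕ)+2) * qint r s ((i:ℕ)+1) else 0) := by
    rw [hF3]; ext j i; simp only [Matrix.of_apply]; split_ifs <;> ring1
  have hF3E : Fmat n r s * (Fmat n r s * Fmat n r s) * Emat n r s
      = Matrix.of (fun j i : Fin (n+1) => if (j:ℕ) = (i:ℕ) + 2 then qint r s ((i:ℕ)+2) * qint r s ((i:ℕ)+1) * qint r s (i:ℕ) * qint r s (n+1-(i:ℕ)) else 0) := by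
    rw [hF3']; exact F3E n r s
  have p3 : Fmat n r s ^ 3 = Fmat n r s * (Fmat n r s * Fmat n r s) := by
    rw [pow_succ, pow_succ, pow_one, mul_assoc]
  have p2 : Fmat n r s ^ 2 = Fmat n r s * Fmat n r s := by rw [pow_two]
  rw [p3, p2, mul_assoc (Fmat n r s) (Emat n r s) (Fmat n r s * Fmat n r s),
    mul_assoc (Fmat n r s * Fmat n r s) (Emat n r s) (Fmat n r s),
    mul_assoc (Fmat n r s) (Fmat n r s) (Emat n r s * Fmat n r s),
    hEF3, hFEF2, hFFEF, hF3E]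
  ext j i
  simp only [Matrix.sub_apply, Matrix.add_apply, Matrix.smul_apply, Matrix.of_apply,
    Matrix.zero_apply, smul_eq_mul]
  by_cases hc : (j:ℕ) = (i:ℕ) + 2
  · rw [if_pos hc, if_pos hc, if_pos hc, if_pos hc]
    have hj := j.isLt
    have hin : (i:ℕ) + 2 ≤ n := by omega
    have e3 : n + 1 - ((i:ℕ) + 3) = n - 2 - (i:ℕ) := by omega
    have e2 : n + 1 - ((i:ℕ) + 2) = (n - 2 - (i:ℕ)) + 1 := by omega
    have e1 : n + 1 - ((i:ℕ) + 1) = (n - 2 - (i:ℕ)) + 2 := by omega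
    have e0 : n + 1 - (i:ℕ) = (n - 2 - (i:ℕ)) + 3 := by omega
    rw [e3, e2, e1, e0]
    exact scalar_id r s hr hs (sub_ne_zero.mpr hrs) (i:ℕ) (n - 2 - (i:ℕ))
  · rw [if_neg hc, if_neg hc, if_neg hc, if_neg hc]
    simp
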